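/- arXiv:1911.02010 — 2 statements merged into one kernel-verified Lean document; each statement's English description precedes it below -/
import Mathlib

section
/- Let $h \in L^1(\mathbb{R}^d)$ whose Fourier transform $\mathcal{F}h$ is integrable and supported in the ball $\{\|\zeta\|\le R\}$, and let $\Sigma$ be a positive semidefinite matrix. Define $g(x) := (2\pi)^{-d/2}\int_{\|\zeta\|\le R} \mathcal{F}h(\zeta)\, e^{\langle\Sigma\zeta,\zeta\rangle/2}\, e^{i\zeta\cdot x}\, d\zeta$. Then for $\xi \sim \mathcal{N}(0,\Sigma)$ and every $\theta \in \mathbb{R}^d$, $\mathbb{E}\,g(\theta+\xi) = h(\theta)$; i.e., $g(x)$ is an unbiased estimator of $h(\theta)$ under the Gaussian shift model $x = \theta+\xi$. -/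
open MeasureTheory Real ProbabilityTheory FourierTransform
open scoped ENNReal NNReal

lemma gauss_char (a : ℝ) :
    ∫ t : ℝ, Complex.exp (Complex.I * a * t) ∂(gaussianReal 0 1) =
      Complex.exp (-(a:ℂ)^2 / 2) := by
  have hd : gaussianReal 0 1 =
      (volume : Measure ℝ).withDensity fun x => ((gaussianPDFReal 0 1 x).toNNReal : ℝ≥0∞) :=
    gaussianReal_of_var_ne_zero 0 one_ne_zero
  rw [hd, integral_withDensity_eq_integral_smul
    (measurable_gaussianPDFReal 0 1).real_toNNReal]
  have key : ∀ t : ℝ, (gaussianPDFReal 0 1 t).toNNReal • Complex.exp (Complex.I * a * t)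
      = ((Real.sqrt (2*π))⁻¹ : ℝ) •
        (Complex.exp (Complex.I * a * t) * Complex.exp (-(1/2 : ℂ) * t^2)) := by
    intro t
    rw [NNReal.smul_def, Real.coe_toNNReal _ (gaussianPDFReal_nonneg 0 1 t)]
    have h1 : gaussianPDFReal 0 1 t = (Real.sqrt (2*π))⁻¹ * rexp (-t^2/2) := by
      simp [gaussianPDFReal]
    rw [h1, Complex.real_smul, Complex.real_smul]
    push_cast
    rw [show (-(1/2:ℂ) * (t:ℂ)^2) = ((-t^2/2 : ℝ) : ℂ) by push_cast; ring,
      ← Complex.ofReal_exp]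
    push_cast
    ring
  simp_rw [key, integral_smul]
  rw [fourierIntegral_gaussian (by norm_num) (a : ℂ)]
  have h2 : ((π : ℂ)/(1/2)) ^ (1/2 : ℂ) = ((Real.sqrt (2*π) : ℝ) : ℂ) := by
    have h : ((π : ℂ)/(1/2)) = ((2*π : ℝ) : ℂ) := by push_cast; ring
    rw [h, show (1/2:ℂ) = ((1/2:ℝ):ℂ) by norm_num,
      ← Complex.ofReal_cpow (by positivity), Real.sqrt_eq_rpow]
  rw [h2, Complex.real_smul]
  have h3 : ((Real.sqrt (2*π) : ℝ) : ℂ) ≠ 0 := by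
    simp; positivity
  rw [← mul_assoc, ← Complex.ofReal_mul, inv_mul_cancel₀ (by positivity)]
  have : -(a:ℂ)^2/(4 * (1/2)) = -(a:ℂ)^2/2 := by ring
  rw [this]
  simp

lemma gauss_char_pi {d : ℕ} (a : Fin d → ℝ) :
    ∫ y : Fin d → ℝ, Complex.exp (Complex.I * ((∑ j, a j * y j : ℝ) : ℂ))
      ∂(Measure.pi fun _ => gaussianReal 0 1) =
      Complex.exp (-((∑ j, (a j)^2 : ℝ) : ℂ) / 2) := by
  letI : MeasureSpace ℝ := ⟨gaussianReal 0 1⟩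
  haveI : SigmaFinite (volume : Measure ℝ) := by
    show SigmaFinite (gaussianReal 0 1); infer_instance
  have h1 : ∀ y : Fin d → ℝ, Complex.exp (Complex.I * ((∑ j, a j * y j : ℝ) : ℂ))
      = ∏ j, Complex.exp (Complex.I * a j * y j) := by
    intro y
    rw [← Complex.exp_sum]
    congr 1
    push_cast
    rw [Finset.mul_sum]
    congr 1; ext j; ring
  simp_rw [h1]
  have h2 := MeasureTheory.integral_fintype_prod_eq_prod (ι := Fin d)
    (fun j (t : ℝ) => Complex.exp (Complex.I * a j * t)) (μ := fun _ => volume)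
  rw [show (Measure.pi fun _ : Fin d => gaussianReal 0 1) = Measure.pi (fun _ => (volume : Measure ℝ)) from rfl, h2]
  simp_rw [show ∀ j, (∫ t : ℝ, Complex.exp (Complex.I * a j * t)) =
      Complex.exp (-(a j : ℂ)^2 / 2) from fun j => gauss_char (a j)]
  rw [← Complex.exp_sum]
  congr 1
  push_cast
  rw [← Finset.sum_div]
  rw [← Finset.sum_neg_distrib]

lemma inversion_aux {d : ℕ} (h : EuclideanSpace ℝ (Fin d) → ℝ) (hcont : Continuous h)
    (hint : Integrable h) (Fh : EuclideanSpace ℝ (Fin d) → ℂ)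
    (hFh : ∀ ζ, Fh ζ = (((2 * Real.pi) ^ (-(d : ℝ) / 2) : ℝ) : ℂ) *
      ∫ x : EuclideanSpace ℝ (Fin d),
        (h x : ℂ) * Complex.exp (-Complex.I * ((inner ℝ ζ x : ℝ) : ℂ)))
    (hFhInt : Integrable Fh) (θ : EuclideanSpace ℝ (Fin d)) :
    ∫ ζ : EuclideanSpace ℝ (Fin d), Fh ζ * Complex.exp (Complex.I * ((inner ℝ ζ θ : ℝ) : ℂ)) =
      (((2 * Real.pi) ^ ((d : ℝ) / 2) : ℝ) : ℂ) * (h θ : ℂ) := by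
  set f : EuclideanSpace ℝ (Fin d) → ℂ := fun x => (h x : ℂ) with hf_def
  have hπ : (0:ℝ) < 2 * π := by positivity
  set K : ℝ := (2 * π) ^ ((d : ℝ) / 2) with hK_def
  have hK : (0:ℝ) < K := Real.rpow_pos_of_pos hπ _
  have hf : Integrable f := hint.ofReal
  have hfc : Continuous f := Complex.continuous_ofReal.comp hcont
  have hCc : K * (2 * π) ^ (-(d : ℝ) / 2) = 1 := by
    rw [hK_def, ← Real.rpow_add hπ, show (d:ℝ)/2 + -(d:ℝ)/2 = 0 by ring, Real.rpow_zero]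
  have hstep : ∀ w : EuclideanSpace ℝ (Fin d),
      𝓕 f w = (K : ℂ) * Fh ((2 * π) • w) := by
    intro w
    have h1 : Fh ((2 * π) • w)
        = (((2 * π) ^ (-(d : ℝ) / 2) : ℝ) : ℂ) * 𝓕 f w := by
      rw [hFh, Real.fourier_eq']
      congr 1
      congr 1
      ext x
      rw [smul_eq_mul, real_inner_smul_left]
      push_cast
      rw [show ((-2:ℂ) * (π:ℂ) * ((inner ℝ x w : ℝ):ℂ) * Complex.I)
          = -Complex.I * (2 * (π:ℂ) * ((inner ℝ x w : ℝ):ℂ)) by ring]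
      simp only [hf_def]
      rw [real_inner_comm w x]
      ring
    rw [h1, ← mul_assoc, ← Complex.ofReal_mul, hCc]
    simp
  have hInt2 : Integrable (𝓕 f) := by
    rw [funext hstep]
    exact ((integrable_comp_smul_iff volume Fh (ne_of_gt hπ)).2 hFhInt).const_mul _
  have hinv : 𝓕⁻ (𝓕 f) θ = f θ := hf.fourierInv_fourier_eq hInt2 hfc.continuousAt
  rw [Real.fourierInv_eq'] at hinv
  have h2 : (∫ w : EuclideanSpace ℝ (Fin d),
      Complex.exp (((2 * π * inner ℝ w θ : ℝ) : ℂ) * Complex.I) • 𝓕 f w)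
      = (K : ℂ) * ∫ w : EuclideanSpace ℝ (Fin d),
          (fun ζ => Fh ζ * Complex.exp (Complex.I * ((inner ℝ ζ θ : ℝ) : ℂ))) ((2 * π) • w) := by
    rw [← integral_const_mul]
    congr 1
    ext w
    rw [hstep w, smul_eq_mul]
    simp only [real_inner_smul_left]
    push_cast
    ring
  have h4 := MeasureTheory.Measure.integral_comp_smul (μ := volume)
    (fun ζ : EuclideanSpace ℝ (Fin d) => Fh ζ * Complex.exp (Complex.I * ((inner ℝ ζ θ : ℝ):ℂ)))
    (2 * π)
  rw [h2, h4, finrank_euclideanSpace_fin] at hinv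
  have h3 : |(((2 * π) ^ d : ℝ))⁻¹| = (((2 * π) ^ d : ℝ))⁻¹ := by
    rw [abs_of_nonneg]; positivity
  rw [h3, Complex.real_smul] at hinv
  have hKK : ((2*π)^d : ℝ) = K * K := by
    rw [hK_def, ← Real.rpow_add hπ, show (d:ℝ)/2 + (d:ℝ)/2 = (d:ℝ) by ring,
      Real.rpow_natCast]
  rw [hKK] at hinv
  have hKne : ((K:ℝ):ℂ) ≠ 0 := by
    simpa using ne_of_gt hK
  rw [show (((K*K)⁻¹ : ℝ) : ℂ) = ((K:ℂ) * (K:ℂ))⁻¹ by push_cast; ring,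
    mul_inv] at hinv
  rw [show ∀ z : ℂ, (K:ℂ) * ((K:ℂ)⁻¹ * (K:ℂ)⁻¹ * z) = (K:ℂ)⁻¹ * z from fun z => by
    field_simp] at hinv
  simp only [hf_def] at hinv
  rw [← hinv, ← mul_assoc, mul_inv_cancel₀ hKne, one_mul]

set_option maxHeartbeats 1000000 in
/-- Unbiasedness of the Fourier-analytic estimator: if `h ∈ L¹(ℝ^d)` is continuous with
integrable Fourier transform supported in the ball of radius `R`, `Σ` is positive
semidefinite with square root `S`, `ξ ∼ N(0,Σ)` (realized as the image of the standard
Gaussian under `S`), and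
`g(x) = (2π)^{-d/2} ∫_{‖ζ‖≤R} 𝓕h(ζ) e^{⟨Σζ,ζ⟩/2} e^{iζ·x} dζ`, then
`E g(θ+ξ) = h(θ)` for every `θ`. -/
theorem stmt13 (d : ℕ) (R : ℝ) (hR : 0 ≤ R)
    (h : EuclideanSpace ℝ (Fin d) → ℝ) (hcont : Continuous h) (hint : Integrable h)
    (Fh : EuclideanSpace ℝ (Fin d) → ℂ)
    (hFh : ∀ ζ, Fh ζ = (((2 * Real.pi) ^ (-(d : ℝ) / 2) : ℝ) : ℂ) *
      ∫ x : EuclideanSpace ℝ (Fin d),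
        (h x : ℂ) * Complex.exp (-Complex.I * ((inner ℝ ζ x : ℝ) : ℂ)))
    (hFhInt : Integrable Fh)
    (hsupp : ∀ ζ : EuclideanSpace ℝ (Fin d), R < ‖ζ‖ → Fh ζ = 0)
    (Sigm S : Matrix (Fin d) (Fin d) ℝ) (hSigm : Sigm.PosSemidef)
    (hS : S.PosSemidef) (hSS : S * S = Sigm)
    (μ : Measure (EuclideanSpace ℝ (Fin d)))
    (hμ : μ = Measure.map (fun z => (Matrix.toEuclideanCLM (𝕜 := ℝ) S) z)
      (Measure.map (⇑(EuclideanSpace.equiv (Fin d) ℝ).symm)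
        (Measure.pi fun _ : Fin d => ProbabilityTheory.gaussianReal 0 1)))
    (g : EuclideanSpace ℝ (Fin d) → ℂ)
    (hg : ∀ x, g x = (((2 * Real.pi) ^ (-(d : ℝ) / 2) : ℝ) : ℂ) *
      ∫ ζ in {ζ : EuclideanSpace ℝ (Fin d) | ‖ζ‖ ≤ R},
        Fh ζ *
          Complex.exp
            ((((inner ℝ ((Matrix.toEuclideanCLM (𝕜 := ℝ) Sigm) ζ) ζ : ℝ) : ℂ)) / 2) *
          Complex.exp (Complex.I * ((inner ℝ ζ x : ℝ) : ℂ)))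
    (θ : EuclideanSpace ℝ (Fin d)) :
    ∫ x, g (θ + x) ∂μ = (h θ : ℂ) := by
  have hπ : (0:ℝ) < 2 * Real.pi := by positivity
  set c : ℝ := (2 * Real.pi) ^ (-(d : ℝ) / 2) with hc_def
  have hCc : c * (2 * Real.pi) ^ ((d : ℝ) / 2) = 1 := by
    rw [hc_def, ← Real.rpow_add hπ, show -(d:ℝ)/2 + (d:ℝ)/2 = 0 by ring, Real.rpow_zero]
  set B : Set (EuclideanSpace ℝ (Fin d)) := {ζ | ‖ζ‖ ≤ R} with hB_def
  have hBmeas : MeasurableSet B := measurableSet_le measurable_norm measurable_const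
  set ν : Measure (Fin d → ℝ) :=
    Measure.pi (fun _ : Fin d => ProbabilityTheory.gaussianReal 0 1) with hν_def
  haveI : IsProbabilityMeasure ν := by rw [hν_def]; infer_instance
  set T : (Fin d → ℝ) → EuclideanSpace ℝ (Fin d) :=
    fun y => (Matrix.toEuclideanCLM (𝕜 := ℝ) S) ((EuclideanSpace.equiv (Fin d) ℝ).symm y)
    with hT_def
  have hTcont : Continuous T :=
    (Matrix.toEuclideanCLM (𝕜 := ℝ) S).continuous.comp
      (EuclideanSpace.equiv (Fin d) ℝ).symm.continuous
  have hμ' : μ = Measure.map T ν := by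
    rw [hμ, Measure.map_map]
    · rfl
    · exact (Matrix.toEuclideanCLM (𝕜 := ℝ) S).continuous.measurable
    · exact (EuclideanSpace.equiv (Fin d) ℝ).symm.continuous.measurable
  set φ : EuclideanSpace ℝ (Fin d) → EuclideanSpace ℝ (Fin d) → ℂ := fun x ζ =>
    Fh ζ * Complex.exp
        ((((inner ℝ ((Matrix.toEuclideanCLM (𝕜 := ℝ) Sigm) ζ) ζ : ℝ) : ℂ)) / 2) *
      Complex.exp (Complex.I * ((inner ℝ ζ x : ℝ) : ℂ)) with hφ_def
  have hg' : ∀ x, g x = (c : ℂ) * ∫ ζ in B, φ x ζ := by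
    intro x; rw [hg x]
  -- the quadratic form
  set q : EuclideanSpace ℝ (Fin d) → ℝ :=
    fun ζ => (inner ℝ ((Matrix.toEuclideanCLM (𝕜 := ℝ) Sigm) ζ) ζ : ℝ) with hq_def
  have hqcont : Continuous q :=
    Continuous.inner (Matrix.toEuclideanCLM (𝕜 := ℝ) Sigm).continuous continuous_id
  have hnormφ : ∀ (x ζ : EuclideanSpace ℝ (Fin d)),
      ‖φ x ζ‖ = ‖Fh ζ‖ * Real.exp (q ζ / 2) := by
    intro x ζ
    rw [hφ_def]
    simp only
    rw [show (((inner ℝ ((Matrix.toEuclideanCLM (𝕜 := ℝ) Sigm) ζ) ζ : ℝ) : ℂ)) / 2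
        = ((q ζ / 2 : ℝ) : ℂ) by rw [hq_def]; push_cast; ring]
    simp [norm_mul, Complex.norm_exp, Complex.mul_re]
  set C : ℝ := Real.exp (‖Matrix.toEuclideanCLM (𝕜 := ℝ) Sigm‖ * R ^ 2 / 2) with hC_def
  have hqle : ∀ ζ : EuclideanSpace ℝ (Fin d), ζ ∈ B →
      q ζ / 2 ≤ ‖Matrix.toEuclideanCLM (𝕜 := ℝ) Sigm‖ * R ^ 2 / 2 := by
    intro ζ hζ
    have h1 : q ζ ≤ ‖(Matrix.toEuclideanCLM (𝕜 := ℝ) Sigm) ζ‖ * ‖ζ‖ :=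
      real_inner_le_norm _ _
    have h2 : ‖(Matrix.toEuclideanCLM (𝕜 := ℝ) Sigm) ζ‖ ≤
        ‖Matrix.toEuclideanCLM (𝕜 := ℝ) Sigm‖ * ‖ζ‖ :=
      ContinuousLinearMap.le_opNorm _ _
    have h3 : ‖ζ‖ ≤ R := hζ
    have h4 : (0:ℝ) ≤ ‖ζ‖ := norm_nonneg _
    have h5 : (0:ℝ) ≤ ‖Matrix.toEuclideanCLM (𝕜 := ℝ) Sigm‖ := norm_nonneg _
    have h6 : q ζ ≤ ‖Matrix.toEuclideanCLM (𝕜 := ℝ) Sigm‖ * ‖ζ‖ * ‖ζ‖ :=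
      le_trans h1 (mul_le_mul_of_nonneg_right h2 h4)
    have h8 : ‖ζ‖ ^ 2 ≤ R ^ 2 := pow_le_pow_left₀ h4 h3 2
    have h9 : ‖Matrix.toEuclideanCLM (𝕜 := ℝ) Sigm‖ * ‖ζ‖ ^ 2 ≤
        ‖Matrix.toEuclideanCLM (𝕜 := ℝ) Sigm‖ * R ^ 2 := mul_le_mul_of_nonneg_left h8 h5
    nlinarith [h6, h9]
  have hbound : ∀ x : EuclideanSpace ℝ (Fin d),
      ∀ᵐ ζ ∂(volume.restrict B), ‖φ x ζ‖ ≤ ‖Fh ζ‖ * C := by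
    intro x
    refine (ae_restrict_iff' hBmeas).2 (ae_of_all _ fun ζ hζ => ?_)
    rw [hnormφ, hC_def]
    exact mul_le_mul_of_nonneg_left (Real.exp_le_exp.2 (hqle ζ hζ)) (norm_nonneg _)
  have hCint : Integrable (fun ζ => ‖Fh ζ‖ * C) (volume.restrict B) :=
    (hFhInt.norm.mul_const C).restrict
  have he1cont : Continuous fun ζ : EuclideanSpace ℝ (Fin d) =>
      Complex.exp ((((inner ℝ ((Matrix.toEuclideanCLM (𝕜 := ℝ) Sigm) ζ) ζ : ℝ) : ℂ)) / 2) :=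
    Complex.continuous_exp.comp ((Complex.continuous_ofReal.comp hqcont).div_const 2)
  have hφmeasV : ∀ x, AEStronglyMeasurable (φ x) volume := by
    intro x
    rw [hφ_def]
    exact (hFhInt.1.mul he1cont.aestronglyMeasurable).mul
      (Complex.continuous_exp.comp (continuous_const.mul
        (Complex.continuous_ofReal.comp
          (Continuous.inner continuous_id continuous_const)))).aestronglyMeasurable
  have hφint : ∀ x, Integrable (φ x) (volume.restrict B) := fun x =>
    Integrable.mono' hCint ((hφmeasV x).restrict) (hbound x)
  have hgcont : Continuous g := by
    have hgeq : g = fun x => (c : ℂ) * ∫ ζ in B, φ x ζ := funext hg'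
    rw [hgeq]
    refine continuous_const.mul
      (continuous_of_dominated (fun x => (hφmeasV x).restrict) hbound hCint
        (ae_of_all _ fun ζ => ?_))
    rw [hφ_def]
    exact continuous_const.mul
      (Complex.continuous_exp.comp (continuous_const.mul
        (Complex.continuous_ofReal.comp
          (Continuous.inner continuous_const continuous_id))))
  -- characteristic function computation
  have key : ∀ ζ : EuclideanSpace ℝ (Fin d),
      (∫ y, Complex.exp (Complex.I * ((inner ℝ ζ (θ + T y) : ℝ) : ℂ)) ∂ν)
        = Complex.exp (Complex.I * ((inner ℝ ζ θ : ℝ) : ℂ)) *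
          Complex.exp (-((q ζ : ℝ) : ℂ) / 2) := by
    intro ζ
    set a : Fin d → ℝ := S.mulVec (fun i => ζ i) with ha_def
    have hsym : ∀ i j, S i j = S j i := by
      intro i j
      conv_lhs => rw [← hS.1]
      simp [Matrix.conjTranspose_apply]
    have hTy : ∀ (y : Fin d → ℝ) (i : Fin d), (T y) i = ∑ j, S i j * y j := by
      intro y i
      rfl
    have hinner : ∀ y : Fin d → ℝ, (inner ℝ ζ (T y) : ℝ) = ∑ j, a j * y j := by
      intro y
      rw [PiLp.inner_apply]
      simp only [RCLike.inner_apply, starRingEnd_apply, star_trivial]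
      rw [Finset.sum_congr rfl fun i _ => mul_comm ((T y) i) (ζ i)]
      calc ∑ i, ζ i * (T y) i = ∑ i, ∑ j, ζ i * (S i j * y j) := by
            simp [hTy, Finset.mul_sum]
        _ = ∑ j, ∑ i, ζ i * (S i j * y j) := Finset.sum_comm
        _ = ∑ j, a j * y j := by
            refine Finset.sum_congr rfl fun j _ => ?_
            rw [ha_def]
            simp only [Matrix.mulVec, dotProduct]
            rw [Finset.sum_mul]
            refine Finset.sum_congr rfl fun i _ => ?_
            rw [hsym j i]; ring
    have hq2 : q ζ = ∑ j, (a j) ^ 2 := by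
      rw [hq_def]
      simp only
      rw [PiLp.inner_apply]
      simp only [RCLike.inner_apply, starRingEnd_apply, star_trivial]
      have hmv : Sigm.mulVec (fun j => ζ j) = S.mulVec a := by
        rw [ha_def, Matrix.mulVec_mulVec, hSS]
      have hCy : ∀ i, ((Matrix.toEuclideanCLM (𝕜 := ℝ) Sigm) ζ) i
          = ∑ j, S i j * a j := by
        intro i
        calc ((Matrix.toEuclideanCLM (𝕜 := ℝ) Sigm) ζ) i
            = (Sigm.mulVec (fun j => ζ j)) i := rfl
          _ = (S.mulVec a) i := by rw [hmv]
          _ = ∑ j, S i j * a j := rfl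
      rw [Finset.sum_congr rfl fun i _ => mul_comm (ζ i) (((Matrix.toEuclideanCLM (𝕜 := ℝ) Sigm) ζ) i)]
      calc ∑ i, ((Matrix.toEuclideanCLM (𝕜 := ℝ) Sigm) ζ) i * ζ i
          = ∑ i, ∑ j, S i j * a j * ζ i := by
            simp [hCy, Finset.sum_mul]
        _ = ∑ j, ∑ i, S i j * a j * ζ i := Finset.sum_comm
        _ = ∑ j, (a j) ^ 2 := by
            refine Finset.sum_congr rfl fun j _ => ?_
            have : ∑ i, S i j * a j * ζ i = a j * ∑ i, S j i * ζ i := by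
              rw [Finset.mul_sum]
              refine Finset.sum_congr rfl fun i _ => ?_
              rw [hsym i j]; ring
            rw [this, ha_def]
            simp only [Matrix.mulVec, dotProduct]
            ring
    calc (∫ y, Complex.exp (Complex.I * ((inner ℝ ζ (θ + T y) : ℝ) : ℂ)) ∂ν)
        = ∫ y, Complex.exp (Complex.I * ((inner ℝ ζ θ : ℝ) : ℂ)) *
            Complex.exp (Complex.I * ((∑ j, a j * y j : ℝ) : ℂ)) ∂ν := by
          congr 1
          ext y
          rw [inner_add_right, hinner y, ← Complex.exp_add]
          push_cast
          ring_nf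
      _ = Complex.exp (Complex.I * ((inner ℝ ζ θ : ℝ) : ℂ)) *
            ∫ y, Complex.exp (Complex.I * ((∑ j, a j * y j : ℝ) : ℂ)) ∂ν :=
          integral_const_mul _ _
      _ = Complex.exp (Complex.I * ((inner ℝ ζ θ : ℝ) : ℂ)) *
            Complex.exp (-((q ζ : ℝ) : ℂ) / 2) := by
          rw [hν_def, gauss_char_pi a, hq2]
  -- Fubini setup
  have hψmeas : AEStronglyMeasurable
      (Function.uncurry fun y ζ => φ (θ + T y) ζ) (ν.prod (volume.restrict B)) := by
    have h1 : AEStronglyMeasurable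
        (fun ζ : EuclideanSpace ℝ (Fin d) => Fh ζ * Complex.exp
          ((((inner ℝ ((Matrix.toEuclideanCLM (𝕜 := ℝ) Sigm) ζ) ζ : ℝ) : ℂ)) / 2))
        (volume.restrict B) :=
      (hFhInt.1.mul he1cont.aestronglyMeasurable).restrict
    have h2 : Continuous (fun p : (Fin d → ℝ) × EuclideanSpace ℝ (Fin d) =>
        Complex.exp (Complex.I * ((inner ℝ p.2 (θ + T p.1) : ℝ) : ℂ))) :=
      Complex.continuous_exp.comp (continuous_const.mul
        (Complex.continuous_ofReal.comp
          (Continuous.inner continuous_snd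
            (continuous_const.add (hTcont.comp continuous_fst)))))
    have := (h1.comp_snd (μ := ν)).mul h2.aestronglyMeasurable
    exact this
  have hψ : Integrable (Function.uncurry fun y ζ => φ (θ + T y) ζ)
      (ν.prod (volume.restrict B)) := by
    rw [integrable_prod_iff hψmeas]
    constructor
    · exact ae_of_all _ fun y => hφint (θ + T y)
    · simp_rw [Function.uncurry, hnormφ]
      exact integrable_const _
  -- main computation
  have hgm : AEStronglyMeasurable (fun x => g (θ + x)) (Measure.map T ν) := by
    have : Continuous fun x : EuclideanSpace ℝ (Fin d) => g (θ + x) :=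
      hgcont.comp (continuous_const.add continuous_id)
    exact this.aestronglyMeasurable
  rw [hμ', integral_map hTcont.measurable.aemeasurable hgm]
  simp_rw [hg', integral_const_mul]
  rw [MeasureTheory.integral_integral_swap hψ]
  have hfinal : ∀ ζ : EuclideanSpace ℝ (Fin d), (∫ y, φ (θ + T y) ζ ∂ν)
      = Fh ζ * Complex.exp (Complex.I * ((inner ℝ ζ θ : ℝ) : ℂ)) := by
    intro ζ
    simp only [hφ_def]
    rw [integral_const_mul, key ζ]
    have hcancel : Complex.exp ((((inner ℝ ((Matrix.toEuclideanCLM (𝕜 := ℝ) Sigm) ζ) ζ : ℝ) : ℂ)) / 2) *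
        (Complex.exp (Complex.I * ((inner ℝ ζ θ : ℝ) : ℂ)) *
          Complex.exp (-((q ζ : ℝ) : ℂ) / 2))
        = Complex.exp (Complex.I * ((inner ℝ ζ θ : ℝ) : ℂ)) := by
      rw [mul_comm (Complex.exp (Complex.I * ((inner ℝ ζ θ : ℝ) : ℂ))) _, ← mul_assoc,
        ← Complex.exp_add, hq_def]
      rw [show (((inner ℝ ((Matrix.toEuclideanCLM (𝕜 := ℝ) Sigm) ζ) ζ : ℝ) : ℂ)) / 2 +
        -(((inner ℝ ((Matrix.toEuclideanCLM (𝕜 := ℝ) Sigm) ζ) ζ : ℝ) : ℂ)) / 2 = 0 by ring]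
      rw [Complex.exp_zero, one_mul]
    rw [mul_assoc, hcancel]
  simp_rw [hfinal]
  rw [setIntegral_eq_integral_of_forall_compl_eq_zero (fun ζ hζ => by
    rw [hsupp ζ (lt_of_not_ge hζ), zero_mul])]
  rw [inversion_aux h hcont hint Fh hFh hFhInt θ]
  rw [← mul_assoc, ← Complex.ofReal_mul, hCc]
  simp
end

section
/- Let $\theta_0,\dots,\theta_{M-1}\in\mathbb{R}^d$ all satisfy $\|\theta_i\| = r$ for some $r>0$, let $\sigma>0$, and let $\phi_i(x) := (2\pi\sigma^2)^{-d/2}\exp(-\|x-\theta_i\|^2/(2\sigma^2))$ be the Gaussian densities. Then $\int_{\mathbb{R}^d}\max_{0\le i\le M-1}\phi_i(x)\,dx \le \int_{\mathbb{R}^d}\exp\left(\frac{r\|y\|}{\sigma}\vee\frac{r^2}{2\sigma^2}\right)p(y)\,dy \le e^{2r\sqrt{d}/\sigma}\vee e^{r^2/\sigma^2}$, where $p$ is the standard Gaussian density on $\mathbb{R}^d$. -/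
open MeasureTheory

private lemma gauss_integrable (d : ℕ) {b : ℝ} (hb : 0 < b) :
    Integrable (fun y : EuclideanSpace ℝ (Fin d) => Real.exp (-b * ‖y‖ ^ 2)) := by
  have h := (GaussianFourier.integrable_cexp_neg_mul_sq_norm_add
      (V := EuclideanSpace ℝ (Fin d)) (b := (b : ℂ)) (by simpa using hb) 0 0).norm
  refine h.congr (Filter.Eventually.of_forall fun y => ?_)
  simp [Complex.norm_exp]
  left
  norm_cast

private lemma gauss_value (d : ℕ) {b : ℝ} (hb : 0 < b) :
    (∫ y : EuclideanSpace ℝ (Fin d), Real.exp (-b * ‖y‖ ^ 2))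
      = (Real.pi / b) ^ ((d : ℝ) / 2) := by
  rw [GaussianFourier.integral_rexp_neg_mul_sq_norm (V := EuclideanSpace ℝ (Fin d)) hb]
  norm_num [finrank_euclideanSpace]

private lemma gauss_moment (d : ℕ) {c : ℝ} (hc : c < 1/2) :
    Integrable (fun y : EuclideanSpace ℝ (Fin d) =>
        Real.exp (c * ‖y‖ ^ 2) * ((2 * Real.pi) ^ (-(d : ℝ) / 2) * Real.exp (-‖y‖ ^ 2 / 2))) ∧
    (∫ y : EuclideanSpace ℝ (Fin d),
        Real.exp (c * ‖y‖ ^ 2) * ((2 * Real.pi) ^ (-(d : ℝ) / 2) * Real.exp (-‖y‖ ^ 2 / 2)))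
      = (1 - 2 * c) ^ (-(d : ℝ) / 2) := by
  have hb : 0 < 1/2 - c := by linarith
  have heq : (fun y : EuclideanSpace ℝ (Fin d) =>
      Real.exp (c * ‖y‖ ^ 2) * ((2 * Real.pi) ^ (-(d : ℝ) / 2) * Real.exp (-‖y‖ ^ 2 / 2)))
      = fun y => (2 * Real.pi) ^ (-(d : ℝ) / 2) * Real.exp (-(1/2 - c) * ‖y‖ ^ 2) := by
    funext y
    rw [show -(1/2 - c) * ‖y‖ ^ 2 = c * ‖y‖ ^ 2 + -‖y‖ ^ 2 / 2 by ring, Real.exp_add]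
    ring
  constructor
  · rw [heq]; exact (gauss_integrable d hb).const_mul _
  · rw [heq, integral_const_mul, gauss_value d hb]
    have hπ : (0:ℝ) < Real.pi := Real.pi_pos
    rw [Real.rpow_def_of_pos (by positivity), Real.rpow_def_of_pos (by positivity),
      Real.rpow_def_of_pos (by linarith), ← Real.exp_add]
    congr 1
    have hlog : Real.log (Real.pi / (1/2 - c)) = Real.log (1 - 2*c)⁻¹ + Real.log (2 * Real.pi) := by
      have h2c : (0:ℝ) < 1 - 2*c := by linarith
      rw [← Real.log_mul (inv_ne_zero h2c.ne') (by positivity)]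
      congr 1
      field_simp
    rw [hlog, Real.log_inv]
    ring

private lemma max_le_quad {lam α γ t : ℝ} (hl : 0 < lam) (ht : 0 ≤ t) (hα : 0 < α) (hγ : 0 ≤ γ)
    (hq : 1 ≤ 4 * α * (γ + lam / 2)) :
    max (lam * t) (lam ^ 2 / 2) ≤ lam ^ 2 / 2 + lam * γ + lam * α * t ^ 2 := by
  apply max_le
  · have h1 : t ≤ lam/2 + γ + α * t^2 := by nlinarith [sq_nonneg (2*α*t - 1)]
    nlinarith
  · nlinarith [mul_nonneg (mul_nonneg hl.le hα.le) (sq_nonneg t), mul_nonneg hl.le hγ]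

private lemma neg_log_le {x : ℝ} (h0 : 0 ≤ x) (h1 : x < 1) :
    -Real.log (1 - x) ≤ x / (1 - x) := by
  have hp : (0:ℝ) < 1 - x := by linarith
  have h := Real.log_le_sub_one_of_pos (x := (1-x)⁻¹) (by positivity)
  rw [Real.log_inv] at h
  have h2 : (1-x)⁻¹ - 1 = x/(1-x) := by field_simp; ring
  linarith

private lemma rpow_le_exp_of_log {x B : ℝ} (h0 : 0 < 1 - x) (hB : -Real.log (1-x) ≤ B) (d : ℕ) :
    (1-x) ^ (-(d:ℝ)/2) ≤ Real.exp ((d:ℝ)/2 * B) := by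
  rw [Real.rpow_def_of_pos h0, Real.exp_le_exp]
  have hd : (0:ℝ) ≤ (d:ℝ) := Nat.cast_nonneg d
  nlinarith

private lemma exp_max_int_le (d : ℕ) {lam α γ : ℝ} (hl : 0 < lam) (hα : 0 < α) (hγ : 0 ≤ γ)
    (hq : 1 ≤ 4 * α * (γ + lam / 2)) (hc : lam * α < 1 / 2) :
    (∫ y : EuclideanSpace ℝ (Fin d),
        Real.exp (max (lam * ‖y‖) (lam ^ 2 / 2)) *
          ((2 * Real.pi) ^ (-(d : ℝ) / 2) * Real.exp (-‖y‖ ^ 2 / 2)))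
      ≤ Real.exp (lam ^ 2 / 2 + lam * γ) * (1 - 2 * (lam * α)) ^ (-(d : ℝ) / 2) := by
  obtain ⟨hint, hval⟩ := gauss_moment d (c := lam * α) hc
  have hmono : (∫ y : EuclideanSpace ℝ (Fin d),
        Real.exp (max (lam * ‖y‖) (lam ^ 2 / 2)) *
          ((2 * Real.pi) ^ (-(d : ℝ) / 2) * Real.exp (-‖y‖ ^ 2 / 2)))
      ≤ ∫ y : EuclideanSpace ℝ (Fin d), Real.exp (lam ^ 2 / 2 + lam * γ) *
          (Real.exp (lam * α * ‖y‖ ^ 2) *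
            ((2 * Real.pi) ^ (-(d : ℝ) / 2) * Real.exp (-‖y‖ ^ 2 / 2))) := by
    apply integral_mono_of_nonneg
    · filter_upwards with y; positivity
    · exact hint.const_mul _
    · filter_upwards with y
      have hkey := max_le_quad (t := ‖y‖) hl (norm_nonneg y) hα hγ hq
      have hP : (0:ℝ) ≤ (2 * Real.pi) ^ (-(d : ℝ) / 2) * Real.exp (-‖y‖ ^ 2 / 2) := by positivity
      calc Real.exp (max (lam * ‖y‖) (lam ^ 2 / 2)) *
            ((2 * Real.pi) ^ (-(d : ℝ) / 2) * Real.exp (-‖y‖ ^ 2 / 2))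
          ≤ Real.exp (lam ^ 2 / 2 + lam * γ + lam * α * ‖y‖ ^ 2) *
            ((2 * Real.pi) ^ (-(d : ℝ) / 2) * Real.exp (-‖y‖ ^ 2 / 2)) :=
            mul_le_mul_of_nonneg_right (Real.exp_le_exp.2 hkey) hP
        _ = _ := by rw [Real.exp_add]; ring
  calc _ ≤ _ := hmono
    _ = Real.exp (lam ^ 2 / 2 + lam * γ) * (1 - 2 * (lam * α)) ^ (-(d : ℝ) / 2) := by
        rw [integral_const_mul, hval]

set_option maxHeartbeats 1000000 in
/-- If `θ_0, …, θ_{M-1} ∈ ℝ^d` all have norm `r` and `φ_i` are the `N(θ_i, σ²I)`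
densities, then `∫ max_i φ_i ≤ ∫ e^{(r‖y‖/σ) ∨ (r²/(2σ²))} p(y) dy ≤ e^{2r√d/σ} ∨ e^{r²/σ²}`,
where `p` is the standard Gaussian density. -/
theorem stmt16 (d M : ℕ) (hM : 0 < M) (r σ : ℝ) (hr : 0 < r) (hσ : 0 < σ)
    (θ : Fin M → EuclideanSpace ℝ (Fin d)) (hθ : ∀ i, ‖θ i‖ = r) :
    (∫ x : EuclideanSpace ℝ (Fin d),
        ⨆ i, (2 * Real.pi * σ ^ 2) ^ (-(d : ℝ) / 2) *
          Real.exp (-‖x - θ i‖ ^ 2 / (2 * σ ^ 2))) ≤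
      (∫ y : EuclideanSpace ℝ (Fin d),
        Real.exp (max (r * ‖y‖ / σ) (r ^ 2 / (2 * σ ^ 2))) *
          ((2 * Real.pi) ^ (-(d : ℝ) / 2) * Real.exp (-‖y‖ ^ 2 / 2))) ∧
    (∫ y : EuclideanSpace ℝ (Fin d),
        Real.exp (max (r * ‖y‖ / σ) (r ^ 2 / (2 * σ ^ 2))) *
          ((2 * Real.pi) ^ (-(d : ℝ) / 2) * Real.exp (-‖y‖ ^ 2 / 2))) ≤
      max (Real.exp (2 * r * Real.sqrt d / σ)) (Real.exp (r ^ 2 / σ ^ 2)) := by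
  obtain ⟨lam, hlam⟩ : ∃ t : ℝ, t = r / σ := ⟨_, rfl⟩
  have hl : 0 < lam := hlam ▸ div_pos hr hσ
  have e1 : ∀ y : EuclideanSpace ℝ (Fin d), r * ‖y‖ / σ = lam * ‖y‖ := fun y => by
    rw [hlam]; ring
  have e2 : r ^ 2 / (2 * σ ^ 2) = lam ^ 2 / 2 := by
    rw [hlam]; field_simp
  obtain ⟨s, hs⟩ : ∃ t : ℝ, t = Real.sqrt d := ⟨_, rfl⟩
  have e3 : 2 * r * Real.sqrt d / σ = 2 * lam * s := by rw [hlam, hs]; ring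
  have e4 : r ^ 2 / σ ^ 2 = lam ^ 2 := by rw [hlam]; field_simp
  simp_rw [e1, e2, e3, e4]
  have hs0 : 0 ≤ s := by rw [hs]; exact Real.sqrt_nonneg _
  have hs2 : s ^ 2 = (d : ℝ) := by rw [hs]; exact Real.sq_sqrt (Nat.cast_nonneg d)
  constructor
  · -- Part 1
    have hd2 : Module.finrank ℝ (EuclideanSpace ℝ (Fin d)) = d := by
      simp [finrank_euclideanSpace]
    have hαv : lam * (1/(3*lam)) = 1/3 := by field_simp
    have hq3 : (1:ℝ) ≤ 4 * (1/(3*lam)) * (lam/4 + lam/2) := ge_of_eq (by field_simp; ring)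
    have hFint : Integrable (fun y : EuclideanSpace ℝ (Fin d) =>
        Real.exp (max (lam * ‖y‖) (lam ^ 2 / 2)) *
          ((2 * Real.pi) ^ (-(d : ℝ) / 2) * Real.exp (-‖y‖ ^ 2 / 2))) := by
      have hint := (gauss_moment d (c := (1:ℝ)/3) (by norm_num)).1
      apply Integrable.mono' (hint.const_mul (Real.exp (lam ^ 2 / 2 + lam * (lam/4))))
      · apply Continuous.aestronglyMeasurable
        fun_prop
      · filter_upwards with y
        rw [Real.norm_eq_abs, abs_of_nonneg (by positivity)]
        have hkey := max_le_quad (t := ‖y‖) (α := 1/(3*lam)) (γ := lam/4) hl (norm_nonneg y)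
          (by positivity) (by positivity) hq3
        rw [hαv] at hkey
        calc Real.exp (max (lam * ‖y‖) (lam ^ 2 / 2)) *
              ((2 * Real.pi) ^ (-(d : ℝ) / 2) * Real.exp (-‖y‖ ^ 2 / 2))
            ≤ Real.exp (lam ^ 2 / 2 + lam * (lam/4) + 1/3 * ‖y‖ ^ 2) *
              ((2 * Real.pi) ^ (-(d : ℝ) / 2) * Real.exp (-‖y‖ ^ 2 / 2)) :=
              mul_le_mul_of_nonneg_right (Real.exp_le_exp.2 hkey) (by positivity)
          _ = _ := by rw [Real.exp_add]; ring
    have hcov : (∫ y : EuclideanSpace ℝ (Fin d),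
          Real.exp (max (lam * ‖y‖) (lam ^ 2 / 2)) *
            ((2 * Real.pi) ^ (-(d : ℝ) / 2) * Real.exp (-‖y‖ ^ 2 / 2)))
        = (σ ^ d)⁻¹ * ∫ x : EuclideanSpace ℝ (Fin d),
            Real.exp (max (lam * ‖σ⁻¹ • x‖) (lam ^ 2 / 2)) *
              ((2 * Real.pi) ^ (-(d : ℝ) / 2) * Real.exp (-‖σ⁻¹ • x‖ ^ 2 / 2)) := by
      rw [MeasureTheory.Measure.integral_comp_inv_smul_of_nonneg volume
        (fun y : EuclideanSpace ℝ (Fin d) =>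
          Real.exp (max (lam * ‖y‖) (lam ^ 2 / 2)) *
            ((2 * Real.pi) ^ (-(d : ℝ) / 2) * Real.exp (-‖y‖ ^ 2 / 2))) hσ.le, hd2,
        smul_eq_mul, ← mul_assoc, inv_mul_cancel₀ (by positivity), one_mul]
    rw [hcov, ← integral_const_mul]
    apply integral_mono_of_nonneg
    · filter_upwards with x
      exact Real.iSup_nonneg fun i => by positivity
    · exact (hFint.comp_smul (inv_ne_zero hσ.ne')).const_mul _
    · filter_upwards with x
      haveI : Nonempty (Fin M) := ⟨⟨0, hM⟩⟩
      apply ciSup_le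
      intro i
      have hns : ‖σ⁻¹ • x‖ = σ⁻¹ * ‖x‖ := by
        rw [norm_smul, Real.norm_eq_abs, abs_of_pos (by positivity)]
      have hC : (2 * Real.pi * σ ^ 2) ^ (-(d:ℝ)/2)
          = (σ ^ d)⁻¹ * (2 * Real.pi) ^ (-(d:ℝ)/2) := by
        rw [Real.mul_rpow (by positivity) (by positivity), mul_comm]
        congr 1
        rw [← Real.rpow_natCast σ 2, ← Real.rpow_mul hσ.le, ← Real.rpow_natCast σ d,
          ← Real.rpow_neg hσ.le]
        congr 1
        push_cast
        ring
      have hip : (inner ℝ x (θ i) : ℝ) ≤ ‖x‖ * r := by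
        have h := real_inner_le_norm x (θ i); rwa [hθ i] at h
      have hsq : ‖x - θ i‖ ^ 2 = ‖x‖ ^ 2 - 2 * (inner ℝ x (θ i) : ℝ) + r ^ 2 := by
        rw [norm_sub_sq_real, hθ i]
      have hmain : -‖x - θ i‖ ^ 2 / (2 * σ ^ 2)
          ≤ lam * (σ⁻¹ * ‖x‖) + -(σ⁻¹ * ‖x‖) ^ 2 / 2 := by
        have he : lam * (σ⁻¹ * ‖x‖) + -(σ⁻¹ * ‖x‖) ^ 2 / 2
            = (2 * r * ‖x‖ - ‖x‖ ^ 2) / (2 * σ ^ 2) := by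
          rw [hlam]; field_simp; ring
        rw [he]
        gcongr
        nlinarith [hip, hsq, sq_nonneg r]
      have hmax : -‖x - θ i‖ ^ 2 / (2 * σ ^ 2)
          ≤ max (lam * ‖σ⁻¹ • x‖) (lam ^ 2 / 2) + -‖σ⁻¹ • x‖ ^ 2 / 2 := by
        rw [hns]
        have h4 := le_max_left (lam * (σ⁻¹ * ‖x‖)) (lam ^ 2 / 2)
        linarith
      rw [hC]
      calc (σ ^ d)⁻¹ * (2 * Real.pi) ^ (-(d:ℝ)/2) * Real.exp (-‖x - θ i‖ ^ 2 / (2 * σ ^ 2))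
          ≤ (σ ^ d)⁻¹ * (2 * Real.pi) ^ (-(d:ℝ)/2) *
            Real.exp (max (lam * ‖σ⁻¹ • x‖) (lam ^ 2 / 2) + -‖σ⁻¹ • x‖ ^ 2 / 2) := by
            have hE := Real.exp_le_exp.2 hmax
            exact mul_le_mul_of_nonneg_left hE (by positivity)
        _ = (σ ^ d)⁻¹ * (Real.exp (max (lam * ‖σ⁻¹ • x‖) (lam ^ 2 / 2)) *
              ((2 * Real.pi) ^ (-(d:ℝ)/2) * Real.exp (-‖σ⁻¹ • x‖ ^ 2 / 2))) := by
            rw [Real.exp_add]; ring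
  · -- Part 2
    rcases le_or_gt (2 * s) lam with h3 | h12
    · -- large lam : α = 1/(3 lam), γ = lam/4
      have key := exp_max_int_le d (lam := lam) (α := 1/(3*lam)) (γ := lam/4) hl
        (by positivity) (by positivity)
        (ge_of_eq (by field_simp; ring))
        (by rw [show lam * (1/(3*lam)) = 1/3 by field_simp]; norm_num)
      refine key.trans ?_
      have hxv : 1 - 2 * (lam * (1/(3*lam))) = 1/3 := by field_simp; ring
      have hlog : -Real.log (1 - 2 * (lam * (1/(3*lam)))) ≤ Real.log 3 := by
        rw [hxv, one_div, Real.log_inv, neg_neg]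
      have hrp := rpow_le_exp_of_log (x := 2 * (lam * (1/(3*lam)))) (by rw [hxv]; norm_num)
        hlog d
      calc Real.exp (lam ^ 2 / 2 + lam * (lam/4)) * (1 - 2 * (lam * (1/(3*lam)))) ^ (-(d:ℝ)/2)
          ≤ Real.exp (lam ^ 2 / 2 + lam * (lam/4)) * Real.exp ((d:ℝ)/2 * Real.log 3) :=
            mul_le_mul_of_nonneg_left hrp (Real.exp_nonneg _)
        _ = Real.exp (lam ^ 2 / 2 + lam * (lam/4) + (d:ℝ)/2 * Real.log 3) :=
            (Real.exp_add _ _).symm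
        _ ≤ Real.exp (lam ^ 2) := by
            rw [Real.exp_le_exp]
            have hl3 : Real.log 3 ≤ 2 := by
              have := Real.log_le_sub_one_of_pos (x := 3) (by norm_num); linarith
            have hl3' : 0 ≤ Real.log 3 := Real.log_nonneg (by norm_num)
            nlinarith [hs2, hs0]
        _ ≤ _ := le_max_right _ _
    · rcases le_or_gt lam s with h1 | h2
      · -- small lam : α = 1/(4 s), γ = s - lam/2
        have hs0' : 0 < s := lt_of_lt_of_le hl h1
        have key := exp_max_int_le d (lam := lam) (α := 1/(4*s)) (γ := s - lam/2) hl
          (by positivity) (by linarith) (ge_of_eq (by field_simp; ring))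
          (by
            have hrw4 : lam * (1/(4*s)) = lam/(4*s) := by ring
            rw [hrw4, div_lt_iff₀ (by positivity)]
            nlinarith)
        refine key.trans ?_
        have hxv : 2 * (lam * (1/(4*s))) = lam/(2*s) := by ring
        have hxle : lam/(2*s) ≤ 1/2 := by
          rw [div_le_iff₀ (by positivity)]; nlinarith
        have hx0 : 0 ≤ lam/(2*s) := by positivity
        have h1x : 0 < 1 - lam/(2*s) := by linarith
        have hlog : -Real.log (1 - 2 * (lam * (1/(4*s)))) ≤ lam/s := by
          rw [hxv]
          refine (neg_log_le hx0 (by linarith)).trans ?_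
          rw [div_le_div_iff₀ h1x (by positivity)]
          have : lam/(2*s) * s = lam/2 := by field_simp
          nlinarith [mul_le_mul_of_nonneg_right hxle hs0'.le]
        have hrp := rpow_le_exp_of_log (x := 2 * (lam * (1/(4*s))))
          (by rw [hxv]; linarith) hlog d
        have hds : (d:ℝ)/2 * (lam/s) = lam * s / 2 := by
          rw [← hs2]; field_simp
        calc Real.exp (lam ^ 2 / 2 + lam * (s - lam/2)) * (1 - 2 * (lam * (1/(4*s)))) ^ (-(d:ℝ)/2)
            ≤ Real.exp (lam ^ 2 / 2 + lam * (s - lam/2)) * Real.exp ((d:ℝ)/2 * (lam/s)) :=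
              mul_le_mul_of_nonneg_left hrp (Real.exp_nonneg _)
          _ = Real.exp (lam ^ 2 / 2 + lam * (s - lam/2) + (d:ℝ)/2 * (lam/s)) :=
              (Real.exp_add _ _).symm
          _ ≤ Real.exp (2 * lam * s) := by
              rw [Real.exp_le_exp, hds]
              nlinarith [mul_pos hl hs0']
          _ ≤ _ := le_max_left _ _
      · -- middle lam : α = 1/(6 s), γ = (3/2) s - lam/2
        have hs0' : 0 < s := by nlinarith
        have key := exp_max_int_le d (lam := lam) (α := 1/(6*s)) (γ := 3/2 * s - lam/2) hl
          (by positivity) (by nlinarith) (ge_of_eq (by field_simp; ring))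
          (by
            have hrw6 : lam * (1/(6*s)) = lam/(6*s) := by ring
            rw [hrw6, div_lt_iff₀ (by positivity)]
            nlinarith)
        refine key.trans ?_
        have hxv : 2 * (lam * (1/(6*s))) = lam/(3*s) := by ring
        have hxle : lam/(3*s) ≤ 2/3 := by
          rw [div_le_iff₀ (by positivity)]; nlinarith
        have hx0 : 0 ≤ lam/(3*s) := by positivity
        have h1x : 0 < 1 - lam/(3*s) := by linarith
        have hlog : -Real.log (1 - 2 * (lam * (1/(6*s)))) ≤ lam/s := by
          rw [hxv]
          refine (neg_log_le hx0 (by linarith)).trans ?_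
          rw [div_le_div_iff₀ h1x (by positivity)]
          have h5 : lam/(3*s) * s = lam/3 := by field_simp
          nlinarith [mul_le_mul_of_nonneg_right hxle hs0'.le]
        have hrp := rpow_le_exp_of_log (x := 2 * (lam * (1/(6*s))))
          (by rw [hxv]; linarith) hlog d
        have hds : (d:ℝ)/2 * (lam/s) = lam * s / 2 := by
          rw [← hs2]; field_simp
        calc Real.exp (lam ^ 2 / 2 + lam * (3/2 * s - lam/2)) *
              (1 - 2 * (lam * (1/(6*s)))) ^ (-(d:ℝ)/2)
            ≤ Real.exp (lam ^ 2 / 2 + lam * (3/2 * s - lam/2)) * Real.exp ((d:ℝ)/2 * (lam/s)) :=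
              mul_le_mul_of_nonneg_left hrp (Real.exp_nonneg _)
          _ = Real.exp (lam ^ 2 / 2 + lam * (3/2 * s - lam/2) + (d:ℝ)/2 * (lam/s)) :=
              (Real.exp_add _ _).symm
          _ ≤ Real.exp (2 * lam * s) := by
              rw [Real.exp_le_exp, hds]
              nlinarith
          _ ≤ _ := le_max_left _ _
end
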